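/- Let p be an odd prime and q ∈ ℚ_p with ord_p(q) < 0. Then {(z - q)^2 : z ∈ ℤ_p} = 2q·ℤ_p + q^2 = q·ℤ_p + q^2. -/

import Mathlib

open Polynomial

/-- Solve `ε z^2 - 2 z - t = 0` in `ℤ_[p]` when `‖ε‖ < 1` and `2` is a unit. -/
lemma aux_solve {p : ℕ} [Fact p.Prime] (h2 : ‖(2 : ℤ_[p])‖ = 1)
    (ε t : ℤ_[p]) (hε : ‖ε‖ < 1) :
    ∃ z : ℤ_[p], ε * z ^ 2 - 2 * z - t = 0 := by
  obtain ⟨u, hu⟩ := (PadicInt.isUnit_iff.2 h2).exists_right_inv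
  set F : Polynomial ℤ_[p] := C ε * X ^ 2 - C 2 * X - C t with hF
  set a : ℤ_[p] := -(t * u) with ha
  have hFa : F.eval a = ε * a ^ 2 := by
    simp only [hF, eval_sub, eval_mul, eval_C, eval_X, eval_pow]
    linear_combination t * hu
  have hFa_norm : ‖F.eval a‖ < 1 := by
    rw [hFa, norm_mul, norm_pow]
    calc ‖ε‖ * ‖a‖ ^ 2 ≤ ‖ε‖ * 1 :=
          mul_le_mul_of_nonneg_left
            (pow_le_one₀ (norm_nonneg a) (PadicInt.norm_le_one a)) (norm_nonneg ε)
      _ < 1 := by simpa using hε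
  have hεa : ‖ε * a‖ < 1 := by
    rw [norm_mul]
    calc ‖ε‖ * ‖a‖ ≤ ‖ε‖ * 1 :=
          mul_le_mul_of_nonneg_left (PadicInt.norm_le_one a) (norm_nonneg ε)
      _ < 1 := by simpa using hε
  have hF'a : ‖F.derivative.eval a‖ = 1 := by
    have heq : F.derivative.eval a = 2 * (ε * a + (-1)) := by
      rw [hF]
      simp
      ring
    rw [heq, norm_mul, h2, one_mul]
    have hne : ‖ε * a‖ ≠ ‖(-1 : ℤ_[p])‖ := by
      rw [norm_neg, norm_one]; exact ne_of_lt hεa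
    rw [PadicInt.norm_add_eq_max_of_ne hne, norm_neg, norm_one]
    exact max_eq_right (le_of_lt (by simpa using hεa))
  have hensel : ‖F.eval a‖ < ‖F.derivative.eval a‖ ^ 2 := by
    rw [hF'a]; simpa using hFa_norm
  obtain ⟨z, hz, -⟩ := hensels_lemma hensel
  refine ⟨z, ?_⟩
  simpa [hF, eval_sub, eval_mul, eval_C, eval_X, eval_pow] using hz

/-- For an odd prime `p` and `q ∈ ℚ_[p]` with `ord_p(q) < 0`,
`{(z-q)² : z ∈ ℤ_[p]} = 2q·ℤ_[p] + q² = q·ℤ_[p] + q²`. -/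
theorem translated_squares_padic (p : ℕ) [Fact p.Prime] (hp : Odd p)
    (q : ℚ_[p]) (hq : q.valuation < 0) :
    ({y : ℚ_[p] | ∃ z : ℤ_[p], y = ((z : ℚ_[p]) - q) ^ 2} =
      {y : ℚ_[p] | ∃ t : ℤ_[p], y = 2 * q * (t : ℚ_[p]) + q ^ 2}) ∧
    ({y : ℚ_[p] | ∃ z : ℤ_[p], y = ((z : ℚ_[p]) - q) ^ 2} =
      {y : ℚ_[p] | ∃ t : ℤ_[p], y = q * (t : ℚ_[p]) + q ^ 2}) := by
  have hq0 : q ≠ 0 := by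
    intro h; rw [h] at hq; simp at hq
  have hp2 : p ≠ 2 := by
    rintro rfl; exact (by norm_num : ¬ Odd 2) hp
  -- ‖2‖ = 1 in ℤ_[p]
  have h2cast : (((2 : ℤ) : ℤ_[p])) = 2 := by norm_num
  have h2 : ‖(2 : ℤ_[p])‖ = 1 := by
    have hdvd : ¬ ((p : ℤ) ∣ (2 : ℤ)) := by
      intro h
      have hpd : p ∣ 2 := by exact_mod_cast h
      exact hp2 ((Nat.prime_dvd_prime_iff_eq Fact.out Nat.prime_two).mp hpd)
    have hlt : ¬ ‖((2 : ℤ) : ℤ_[p])‖ < 1 := by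
      rw [PadicInt.norm_int_lt_one_iff_dvd]; exact hdvd
    rw [← h2cast]
    exact le_antisymm (PadicInt.norm_le_one _) (not_lt.mp hlt)
  obtain ⟨u, hu⟩ := (PadicInt.isUnit_iff.2 h2).exists_right_inv
  -- ‖q⁻¹‖ < 1
  have hnormq : 1 < ‖q‖ := by
    rw [Padic.norm_eq_zpow_neg_valuation hq0]
    have hv : (0 : ℤ) < -q.valuation := by linarith
    refine one_lt_zpow₀ ?_ hv
    exact_mod_cast (Fact.out : p.Prime).one_lt
  have hεn : ‖q⁻¹‖ < 1 := by
    rw [norm_inv]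
    exact inv_lt_one_of_one_lt₀ hnormq
  set ε : ℤ_[p] := ⟨q⁻¹, le_of_lt hεn⟩ with hεdef
  have hεnorm : ‖ε‖ < 1 := hεn
  have hc : q * ((ε : ℚ_[p])) = 1 := mul_inv_cancel₀ hq0
  have h2c : ((2 : ℤ_[p]) : ℚ_[p]) = 2 := by norm_cast
  -- surjectivity: every q*t + q^2 is attained
  have key : ∀ t : ℤ_[p], ∃ z : ℤ_[p], ((z : ℚ_[p]) - q) ^ 2 = q * t + q ^ 2 := by
    intro t
    obtain ⟨z, hz⟩ := aux_solve h2 ε t hεnorm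
    refine ⟨z, ?_⟩
    have h2' : (ε : ℚ_[p]) * (z : ℚ_[p]) ^ 2 - 2 * z - t = 0 := by
      have := congrArg (fun x : ℤ_[p] => (x : ℚ_[p])) hz
      push_cast at this
      rw [h2c] at this
      exact this
    linear_combination q * h2' - (z : ℚ_[p]) ^ 2 * hc
  -- forward: every square is of the form q*t + q^2
  have fwd : ∀ z : ℤ_[p], ∃ t : ℤ_[p],
      ((z : ℚ_[p]) - q) ^ 2 = q * t + q ^ 2 := by
    intro z
    refine ⟨ε * z ^ 2 - 2 * z, ?_⟩
    push_cast
    rw [h2c]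
    linear_combination (-(z : ℚ_[p]) ^ 2) * hc
  have hu' : (2 : ℚ_[p]) * ((u : ℤ_[p]) : ℚ_[p]) = 1 := by
    have := congrArg (fun x : ℤ_[p] => (x : ℚ_[p])) hu
    push_cast at this
    rw [h2c] at this
    exact this
  constructor
  · ext y
    simp only [Set.mem_setOf_eq]
    constructor
    · rintro ⟨z, rfl⟩
      obtain ⟨t, ht⟩ := fwd z
      refine ⟨u * t, ?_⟩
      rw [ht]; push_cast
      linear_combination (-(q * (t : ℚ_[p]))) * hu'
    · rintro ⟨t, rfl⟩
      obtain ⟨z, hz⟩ := key (2 * t)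
      refine ⟨z, ?_⟩
      rw [hz]; push_cast; rw [h2c]; ring
  · ext y
    simp only [Set.mem_setOf_eq]
    constructor
    · rintro ⟨z, rfl⟩
      obtain ⟨t, ht⟩ := fwd z
      exact ⟨t, ht⟩
    · rintro ⟨t, rfl⟩
      obtain ⟨z, hz⟩ := key t
      exact ⟨z, hz.symm⟩
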